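/- arXiv:1704.04716 — 2 statements merged into one kernel-verified Lean document; each statement's English description precedes it below -/
import Mathlib

section
/- For 1 < α < 2, the series ∑_{m=0}^∞ g_m^α converges to 0, where g_m^α = (-1)^m C(α, m). -/
/-- The Grünwald weight `g_m^α = (-1)^m * C(α, m)`. -/
noncomputable def grunwaldG (α : ℝ) (m : ℕ) : ℝ :=
  (-1) ^ m * (∏ i ∈ Finset.range m, (α - i)) / m.factorial

-- sign lemma
lemma sign_lem (γ : ℝ) (hγ : γ ≤ 0) (m : ℕ) :
    0 ≤ (-1) ^ m * ∏ i ∈ Finset.range m, (γ - i) := by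
  induction m with
  | zero => simp
  | succ n ih =>
    rw [Finset.prod_range_succ, pow_succ]
    have h : (0:ℝ) ≤ (n : ℝ) - γ := by
      have : (0:ℝ) ≤ (n:ℝ) := Nat.cast_nonneg n
      linarith
    calc (0:ℝ) ≤ ((-1) ^ n * ∏ i ∈ Finset.range n, (γ - i)) * ((n:ℝ) - γ) :=
          mul_nonneg ih h
      _ = (-1) ^ n * -1 * ((∏ i ∈ Finset.range n, (γ - i)) * (γ - n)) := by ring

-- Pascal
lemma pascal (α : ℝ) (m : ℕ) :
    grunwaldG α (m + 1) = grunwaldG (α - 1) (m + 1) - grunwaldG (α - 1) m := by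
  unfold grunwaldG
  have h1 : ∏ i ∈ Finset.range (m + 1), (α - i) =
      (∏ i ∈ Finset.range m, (α - 1 - i)) * α := by
    rw [Finset.prod_range_succ']
    congr 1
    · apply Finset.prod_congr rfl
      intro i _
      push_cast
      ring
    · simp
  have h2 : ∏ i ∈ Finset.range (m + 1), (α - 1 - i) =
      (∏ i ∈ Finset.range m, (α - 1 - i)) * (α - 1 - m) := Finset.prod_range_succ _ _
  rw [h1, h2, Nat.factorial_succ]
  have hf : (m.factorial : ℝ) ≠ 0 := Nat.cast_ne_zero.mpr m.factorial_ne_zero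
  have hm : ((m:ℝ) + 1) ≠ 0 := by positivity
  push_cast
  field_simp
  ring

lemma partial_sum (α : ℝ) (n : ℕ) :
    ∑ m ∈ Finset.range (n + 1), grunwaldG α m = grunwaldG (α - 1) n := by
  induction n with
  | zero => simp [grunwaldG]
  | succ n ih =>
    rw [Finset.sum_range_succ, ih, pascal]
    ring

lemma abs_bound (β : ℝ) (hβ0 : 0 ≤ β) (hβ1 : β ≤ 1) (n : ℕ) :
    |grunwaldG β (n + 1)| ≤ β / (n + 1) := by
  unfold grunwaldG
  rw [abs_div, abs_mul, abs_pow, abs_neg, abs_one, one_pow, one_mul, Finset.abs_prod]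
  have hprod : ∏ i ∈ Finset.range (n + 1), |β - i| ≤ β * n.factorial := by
    rw [Finset.prod_range_succ']
    have h0 : |β - (0:ℕ)| = β := by simp [abs_of_nonneg hβ0]
    rw [h0]
    rw [mul_comm]
    apply mul_le_mul_of_nonneg_left _ hβ0
    calc ∏ i ∈ Finset.range n, |β - (↑(i + 1):ℝ)|
        ≤ ∏ i ∈ Finset.range n, ((i:ℝ) + 1) := by
          apply Finset.prod_le_prod
          · intro i _; positivity
          · intro i _
            rw [abs_of_nonpos (by push_cast; linarith [Nat.cast_nonneg (α := ℝ) i])]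
            push_cast; linarith [Nat.cast_nonneg (α := ℝ) i]
      _ = (n.factorial : ℝ) := by
          push_cast [← Finset.prod_range_add_one_eq_factorial]
          rfl
  have hfac : |((n+1).factorial : ℝ)| = ((n+1).factorial : ℝ) := abs_of_pos (by positivity)
  rw [hfac]
  rw [div_le_div_iff₀ (by positivity) (by positivity)]
  calc (∏ i ∈ Finset.range (n + 1), |β - i|) * ((n:ℝ) + 1)
      ≤ β * n.factorial * ((n:ℝ) + 1) := by
        apply mul_le_mul_of_nonneg_right hprod (by positivity)
    _ = β * ((n+1).factorial : ℝ) := by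
        rw [Nat.factorial_succ]; push_cast; ring

theorem grunwaldG_hasSum_zero (α : ℝ) (hα : 1 < α) (hα2 : α < 2) :
    HasSum (fun m : ℕ => grunwaldG α m) 0 := by
  set β := α - 1 with hβ
  have hβ0 : 0 ≤ β := by linarith
  have hβ1 : β ≤ 1 := by linarith
  -- nonnegativity for m ≥ 2
  have hnonneg : ∀ k : ℕ, 0 ≤ grunwaldG α (k + 2) := by
    intro k
    unfold grunwaldG
    have h1 : ∏ i ∈ Finset.range (k + 2), (α - i) =
        ((∏ i ∈ Finset.range k, ((α - 2) - i)) * (α - 1)) * α := by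
      rw [Finset.prod_range_succ', Finset.prod_range_succ']
      have he : ∀ i ∈ Finset.range k, (α - ↑(i + 1 + 1)) = (α - 2 - i) := by
        intro i _; push_cast; ring
      rw [Finset.prod_congr rfl he]
      push_cast
      ring
    rw [h1]
    have hs := sign_lem (α - 2) (by linarith) k
    have : ((-1:ℝ)) ^ (k + 2) = (-1) ^ k := by ring
    rw [this]
    have hfac : (0:ℝ) < ((k+2).factorial : ℝ) := by positivity
    apply div_nonneg _ (le_of_lt hfac)
    have : (-1:ℝ) ^ k * ((∏ i ∈ Finset.range k, (α - 2 - i)) * (α - 1) * α)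
        = ((-1:ℝ) ^ k * ∏ i ∈ Finset.range k, (α - 2 - i)) * ((α - 1) * α) := by ring
    rw [this]
    exact mul_nonneg hs (by nlinarith)
  -- partial sums tend to 0
  have htend : Filter.Tendsto (fun n => ∑ m ∈ Finset.range n, grunwaldG α m)
      Filter.atTop (nhds 0) := by
    have h1 : Filter.Tendsto (fun n : ℕ => grunwaldG (α - 1) (n + 1))
        Filter.atTop (nhds 0) := by
      apply squeeze_zero_norm
        (fun n => le_of_eq_of_le (Real.norm_eq_abs _) (abs_bound β hβ0 hβ1 n))
      apply Filter.Tendsto.div_atTop tendsto_const_nhds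
      exact Filter.tendsto_atTop_add_const_right _ _ tendsto_natCast_atTop_atTop
    have h2 : Filter.Tendsto (fun n : ℕ => grunwaldG (α - 1) n)
        Filter.atTop (nhds 0) := (Filter.tendsto_add_atTop_iff_nat 1).mp h1
    rw [← Filter.tendsto_add_atTop_iff_nat 1]
    simp only [partial_sum]
    exact h2
  -- summability
  have hsum : Summable (fun m : ℕ => grunwaldG α m) := by
    rw [← summable_nat_add_iff 2]
    apply summable_of_sum_range_le (c := β + α) (fun n => hnonneg n)
    intro n
    have key : ∑ i ∈ Finset.range (n + 2), grunwaldG α i =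
        (∑ i ∈ Finset.range n, grunwaldG α (i + 2)) + grunwaldG α 1 + grunwaldG α 0 := by
      rw [Finset.sum_range_succ', Finset.sum_range_succ']
    have h01 : grunwaldG α 0 = 1 := by simp [grunwaldG]
    have h1 : grunwaldG α 1 = -α := by simp [grunwaldG]
    have hps := partial_sum α (n + 1)
    have hb := abs_bound β hβ0 hβ1 n
    have : ∑ i ∈ Finset.range n, grunwaldG α (i + 2) = grunwaldG β (n + 1) + α - 1 := by
      have : (n + 1) + 1 = n + 2 := rfl
      rw [this] at hps
      rw [key] at hps
      rw [h01, h1] at hps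
      linarith
    rw [this]
    have : |grunwaldG β (n + 1)| ≤ β := by
      have : β / ((n:ℝ) + 1) ≤ β := by
        apply div_le_self hβ0
        have : (0:ℝ) ≤ (n:ℝ) := Nat.cast_nonneg n
        linarith
      linarith
    have := abs_le.mp this
    linarith [this.2]
  -- conclude
  have hhs := hsum.hasSum
  have := hhs.tendsto_sum_nat
  have h0 : ∑' m, grunwaldG α m = 0 := tendsto_nhds_unique this htend
  rwa [h0] at hhs
end

section
/- For 1 < α < 2 and the weighted coefficients φ_m^α defined by φ_0^α = (α/2)g_0^α, φ_m^α = (α/2)g_m^α + ((2-α)/2)g_{m-1}^α (m ≥ 1), one has φ_0^α = α/2 > 0, φ_1^α = (2 - α - α²)/2 < 0, φ_2^α = α(α² + α - 4)/4, and φ_m^α ≥ 0 for all m ≥ 3. -/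
/-- The weighted Grünwald coefficient `φ_m^α`. -/
noncomputable def weightedPhi (α : ℝ) : ℕ → ℝ
  | 0 => α / 2 * grunwaldG α 0
  | m + 1 => α / 2 * grunwaldG α (m + 1) + (2 - α) / 2 * grunwaldG α m

lemma grunwaldG_succ (α : ℝ) (m : ℕ) :
    grunwaldG α (m + 1) = grunwaldG α m * (m - α) / (m + 1) := by
  unfold grunwaldG
  rw [Finset.prod_range_succ, Nat.factorial_succ]
  push_cast
  have h1 : ((m.factorial : ℝ)) ≠ 0 := by positivity
  have h2 : ((m : ℝ) + 1) ≠ 0 := by positivity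
  field_simp
  ring

lemma grunwaldG_nonneg (α : ℝ) (hα : 1 < α) (hα2 : α < 2) :
    ∀ m, 2 ≤ m → 0 ≤ grunwaldG α m := by
  intro m hm
  induction m with
  | zero => omega
  | succ n ih =>
    rcases Nat.lt_or_ge n 2 with h | h
    · interval_cases n
      · omega
      · have : grunwaldG α 2 = α * (α - 1) / 2 := by
          unfold grunwaldG
          simp [Finset.prod_range_succ]
        rw [this]
        have : (0:ℝ) < α - 1 := by linarith
        positivity
    · rw [grunwaldG_succ]
      have h1 : 0 ≤ grunwaldG α n := ih h
      have h2 : (0:ℝ) ≤ (n : ℝ) - α := by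
        have : (2:ℝ) ≤ n := by exact_mod_cast h
        linarith
      positivity

theorem weightedPhi_signs (α : ℝ) (hα : 1 < α) (hα2 : α < 2) :
    weightedPhi α 0 = α / 2 ∧ 0 < weightedPhi α 0 ∧
    weightedPhi α 1 = (2 - α - α ^ 2) / 2 ∧ weightedPhi α 1 < 0 ∧
    weightedPhi α 2 = α * (α ^ 2 + α - 4) / 4 ∧
    (∀ m : ℕ, 3 ≤ m → 0 ≤ weightedPhi α m) := by
  have g0 : grunwaldG α 0 = 1 := by unfold grunwaldG; simp
  have g1 : grunwaldG α 1 = -α := by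
    unfold grunwaldG; simp [Finset.prod_range_succ]
  have g2 : grunwaldG α 2 = α * (α - 1) / 2 := by
    unfold grunwaldG
    simp [Finset.prod_range_succ]
  refine ⟨?_, ?_, ?_, ?_, ?_, ?_⟩
  · show α / 2 * grunwaldG α 0 = α / 2; rw [g0]; ring
  · show 0 < α / 2 * grunwaldG α 0; rw [g0]; nlinarith
  · show α / 2 * grunwaldG α 1 + (2 - α) / 2 * grunwaldG α 0 = _
    rw [g0, g1]; ring
  · show α / 2 * grunwaldG α 1 + (2 - α) / 2 * grunwaldG α 0 < 0
    rw [g0, g1]; nlinarith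
  · show α / 2 * grunwaldG α 2 + (2 - α) / 2 * grunwaldG α 1 = _
    rw [g1, g2]; ring
  · intro m hm
    obtain ⟨k, rfl⟩ : ∃ k, m = k + 1 := ⟨m - 1, by omega⟩
    show 0 ≤ α / 2 * grunwaldG α (k + 1) + (2 - α) / 2 * grunwaldG α k
    have h1 : 0 ≤ grunwaldG α (k + 1) := grunwaldG_nonneg α hα hα2 _ (by omega)
    have h2 : 0 ≤ grunwaldG α k := grunwaldG_nonneg α hα hα2 _ (by omega)
    have ha : (0:ℝ) ≤ α / 2 := by linarith
    have hb : (0:ℝ) ≤ (2 - α) / 2 := by linarith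
    nlinarith
end
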